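/- A matrix M ∈ 𝓜^C_{l,n} is dead (i.e., M ∈ 𝓓(X)) if and only if for every pair (i,j) with 0 ≤ i < l and 0 ≤ j < n such that M(i,j) = 1, one has x^i_j < y^{R(M)}_j. -/

import Mathlib

open Set

/-- A directed path in `Y ⊆ ℝⁿ`: a continuous map from the unit interval, all of whose
coordinate functions are monotone nondecreasing, with values in `Y`. -/
def IsDiPath (n : ℕ) (Y : Set (Fin n → ℝ)) (p : unitInterval → Fin n → ℝ) : Prop :=
  Continuous p ∧ (∀ t, p t ∈ Y) ∧ ∀ j : Fin n, Monotone fun t => p t j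

/-- A total directed path goes from `(0,…,0)` to `(1,…,1)`. -/
def IsTotalDiPath (n : ℕ) (Y : Set (Fin n → ℝ)) (p : unitInterval → Fin n → ℝ) : Prop :=
  IsDiPath n Y p ∧ p 0 = (fun _ => (0:ℝ)) ∧ p 1 = (fun _ => (1:ℝ))

/-- The unit cube `[0,1]^n`. -/
def cube (n : ℕ) : Set (Fin n → ℝ) := {z | ∀ j, z j ∈ Icc (0:ℝ) 1}

/-- `M` has no zero row. -/
def NoZeroRow {l n : ℕ} (M : Fin l → Fin n → Bool) : Prop := ∀ i, ∃ j, M i j = true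

/-- Every column of `M` contains exactly one `1`. -/
def ColUnit {l n : ℕ} (M : Fin l → Fin n → Bool) : Prop := ∀ j, ∃! i, M i j = true

/-- Entrywise order on boolean matrices. -/
def matLE {l n : ℕ} (M N : Fin l → Fin n → Bool) : Prop := ∀ i j, M i j = true → N i j = true

/-- The extended hole `R̃^i_j = ∏_{j'<j} [0,y^i_{j'}) × (x^i_j, y^i_j) × ∏_{j'>j} [0,y^i_{j'})`. -/
def extHole {l n : ℕ} (x y : Fin l → Fin n → ℝ) (i : Fin l) (j : Fin n) : Set (Fin n → ℝ) :=
  {z | z j ∈ Ioo (x i j) (y i j) ∧ ∀ j', j' ≠ j → z j' ∈ Ico (0:ℝ) (y i j')}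

/-- `X_M = [0,1]^n \ ⋃_{(i,j) : M(i,j)=1} R̃^i_j`. -/
def XM {l n : ℕ} (x y : Fin l → Fin n → ℝ) (M : Fin l → Fin n → Bool) : Set (Fin n → ℝ) :=
  cube n \ ⋃ (i : Fin l) (j : Fin n) (_ : M i j = true), extHole x y i j

/-- `M` is dead if `X_M` contains no total directed path. -/
def Dead {l n : ℕ} (x y : Fin l → Fin n → ℝ) (M : Fin l → Fin n → Bool) : Prop :=
  ¬ ∃ p, IsTotalDiPath n (XM x y M) p

/-- `X = [0,1]^n \ ⋃_i R^i` where `R^i = ∏_j (x^i_j, y^i_j)`. -/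
def Xfull {l n : ℕ} (x y : Fin l → Fin n → ℝ) : Set (Fin n → ℝ) :=
  cube n \ ⋃ i : Fin l, {z | ∀ j, z j ∈ Ioo (x i j) (y i j)}

theorem stmt1 {l n : ℕ} (hn : 1 ≤ n) (hl : 1 ≤ l)
    (x y : Fin l → Fin n → ℝ)
    (hx : ∀ i j, 0 < x i j) (hxy : ∀ i j, x i j < y i j) (hy1 : ∀ i j, y i j < 1)
    (M : Fin l → Fin n → Bool) (hM : ColUnit M) :
    Dead x y M ↔
      ∀ i j, M i j = true → ∀ i', (∃ j', M i' j' = true) → x i j < y i' j := by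
  constructor
  · -- Dead → condition
    intro hdead i0 j0 hM0 i1 hrow
    by_contra hcon
    push_neg at hcon
    obtain ⟨j1, hM1⟩ := hrow
    have hne : j1 ≠ j0 := by
      rintro rfl
      have hii : i1 = i0 := (hM j1).unique hM1 hM0
      rw [hii] at hcon
      exact absurd hcon (not_le.mpr (hxy i0 j1))
    exact hdead ⟨fun t k =>
        if k = j0 then x i0 j0 * min (3*(t:ℝ)) 1 + (1 - x i0 j0) * max (3*(t:ℝ)-2) 0
        else if k = j1 then min (max (3*(t:ℝ)-1) 0) 1 else max (3*(t:ℝ)-2) 0,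
      ⟨⟨by
        -- continuity
        apply continuous_pi
        intro k
        try dsimp only
        have hc : Continuous fun t : unitInterval => (t : ℝ) := continuous_subtype_val
        split_ifs <;> fun_prop, by
        -- membership
        intro t
        have ht0 : (0:ℝ) ≤ t := t.2.1
        have ht1 : (t:ℝ) ≤ 1 := t.2.2
        have hX0a : 0 < x i0 j0 := hx i0 j0
        have hX0b : x i0 j0 < 1 := (hxy i0 j0).trans (hy1 i0 j0)
        have hm1 : 0 ≤ min (3*(t:ℝ)) 1 := le_min (by linarith) zero_le_one
        have hm2 : min (3*(t:ℝ)) 1 ≤ 1 := min_le_right _ _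
        have hn1 : 0 ≤ max (3*(t:ℝ)-2) 0 := le_max_right _ _
        have hn2 : max (3*(t:ℝ)-2) 0 ≤ 1 := max_le (by linarith) zero_le_one
        have hq1 : 0 ≤ min (max (3*(t:ℝ)-1) 0) 1 := le_min (le_max_right _ _) zero_le_one
        have hq2 : min (max (3*(t:ℝ)-1) 0) 1 ≤ 1 := min_le_right _ _
        constructor
        · -- in cube
          intro k
          dsimp only
          split_ifs
          · exact ⟨by nlinarith, by nlinarith⟩
          · exact ⟨hq1, hq2⟩
          · exact ⟨hn1, hn2⟩
        · -- not in any hole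
          intro hmem
          simp only [mem_iUnion] at hmem
          obtain ⟨i, j, hMij, hj, hall⟩ := hmem
          by_cases e0 : j = j0
          · subst e0
            have hii : i = i0 := (hM j).unique hMij hM0
            subst hii
            simp only [eq_self_iff_true, if_true, mem_Ioo] at hj
            -- coordinate j0 exceeds x i0 j0, forces t > 2/3
            have h23 : 2 < 3*(t:ℝ) := by
              by_contra hle
              push_neg at hle
              have hz : max (3*(t:ℝ)-2) 0 = 0 := max_eq_right (by linarith)
              rw [hz] at hj
              nlinarith [hj.1]
            have hh := hall j1 hne
            simp only [if_neg hne, eq_self_iff_true, if_true, mem_Ico] at hh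
            have : min (max (3*(t:ℝ)-1) 0) 1 = 1 :=
              min_eq_right (le_max_of_le_left (by linarith))
            rw [this] at hh
            exact absurd hh.2 (not_lt.mpr (le_of_lt (hy1 i j1)))
          · by_cases e1 : j = j1
            · subst e1
              have hii : i = i1 := (hM j).unique hMij hM1
              subst hii
              simp only [if_neg e0, eq_self_iff_true, if_true, mem_Ioo] at hj
              have h13 : 1 ≤ 3*(t:ℝ) := by
                by_contra hlt
                push_neg at hlt
                have hz : max (3*(t:ℝ)-1) 0 = 0 := max_eq_right (by linarith)
                rw [hz] at hj
                have := hj.1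
                rw [min_eq_left zero_le_one] at this
                exact absurd this (not_lt.mpr (le_of_lt (hx i j)))
              have hh := hall j0 (Ne.symm e0)
              simp only [eq_self_iff_true, if_true, mem_Ico] at hh
              have hmin : min (3*(t:ℝ)) 1 = 1 := min_eq_right (by linarith)
              rw [hmin] at hh
              have hX0a : 0 < x i0 j0 := hx i0 j0
              have hX0b : x i0 j0 < 1 := (hxy i0 j0).trans (hy1 i0 j0)
              nlinarith [hh.2, hcon]
            · simp only [if_neg e0, if_neg e1, mem_Ioo] at hj
              have h23 : 2 < 3*(t:ℝ) := by
                by_contra hle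
                push_neg at hle
                have hz : max (3*(t:ℝ)-2) 0 = 0 := max_eq_right (by linarith)
                rw [hz] at hj
                exact absurd hj.1 (not_lt.mpr (le_of_lt (hx i j)))
              have hj1j : j1 ≠ j := fun h => e1 h.symm
              have hh := hall j1 hj1j
              simp only [if_neg hne, eq_self_iff_true, if_true, mem_Ico] at hh
              have : min (max (3*(t:ℝ)-1) 0) 1 = 1 :=
                min_eq_right (le_max_of_le_left (by linarith))
              rw [this] at hh
              exact absurd hh.2 (not_lt.mpr (le_of_lt (hy1 i j1))), by
        -- monotone
        intro k a b hab
        have hab' : (a:ℝ) ≤ b := hab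
        have hX0a : (0:ℝ) ≤ x i0 j0 := le_of_lt (hx i0 j0)
        have hX0b : x i0 j0 ≤ 1 := le_of_lt ((hxy i0 j0).trans (hy1 i0 j0))
        dsimp only
        split_ifs
        · have h1 : min (3*(a:ℝ)) 1 ≤ min (3*(b:ℝ)) 1 :=
            min_le_min (by linarith) le_rfl
          have h2 : max (3*(a:ℝ)-2) 0 ≤ max (3*(b:ℝ)-2) 0 :=
            max_le_max (by linarith) le_rfl
          nlinarith
        · exact min_le_min (max_le_max (by linarith) le_rfl) le_rfl
        · exact max_le_max (by linarith) le_rfl⟩, by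
        -- p 0 = 0
        funext k
        simp only [Icc.coe_zero]
        norm_num, by
        -- p 1 = 1
        funext k
        simp only [Icc.coe_one]
        norm_num⟩⟩
  · -- condition → Dead
    intro hcond
    rintro ⟨p, ⟨hpc, hpmem, hpmono⟩, hp0, hp1⟩
    have hcc : ∀ j, ∃ i, M i j = true := fun j => (hM j).exists
    choose c hc using hcc
    set S : Set unitInterval :=
      {t | ∀ j i', (∃ j', M i' j' = true) → p t j < y i' j} with hSdef
    have keyA : ∀ t ∈ S, ∀ j, p t j ≤ x (c j) j := by
      intro t ht j
      by_contra hgt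
      push_neg at hgt
      have hmem := hpmem t
      rw [XM, mem_diff] at hmem
      apply hmem.2
      simp only [mem_iUnion]
      refine ⟨c j, j, hc j, ⟨hgt, ht j (c j) ⟨j, hc j⟩⟩, ?_⟩
      intro j' _
      exact ⟨(hmem.1 j').1, ht j' (c j) ⟨j, hc j⟩⟩
    have hopen : IsOpen S := by
      have hrw : S = ⋂ (j : Fin n), ⋂ (i' : Fin l),
          {t | (∃ j', M i' j' = true) → p t j < y i' j} := by
        ext t
        simp only [hSdef, mem_setOf_eq, mem_iInter]
      rw [hrw]
      refine isOpen_iInter_of_finite fun j => isOpen_iInter_of_finite fun i' => ?_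
      by_cases hr : ∃ j', M i' j' = true
      · have : {t | (∃ j', M i' j' = true) → p t j < y i' j}
            = (fun t => p t j) ⁻¹' Iio (y i' j) := by
          ext t; simp [hr]
        rw [this]
        exact isOpen_Iio.preimage ((continuous_apply j).comp hpc)
      · have : {t | (∃ j', M i' j' = true) → p t j < y i' j} = univ := by
          ext t; simp [hr]
        rw [this]; exact isOpen_univ
    have hclosed : IsClosed S := by
      apply isClosed_of_closure_subset
      have hC : closure S ⊆ {t | ∀ j, p t j ≤ x (c j) j} := by
        apply closure_minimal
        · exact fun t ht j => keyA t ht j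
        · have : {t : unitInterval | ∀ j, p t j ≤ x (c j) j}
              = ⋂ j, (fun t => p t j) ⁻¹' Iic (x (c j) j) := by
            ext t; simp [mem_iInter]
          rw [this]
          exact isClosed_iInter fun j => isClosed_Iic.preimage ((continuous_apply j).comp hpc)
      intro t ht j i' hr
      exact lt_of_le_of_lt (hC ht j) (hcond (c j) j (hc j) i' hr)
    have hne0 : (0 : unitInterval) ∈ S := by
      intro j i' hr
      have : p 0 j = 0 := by rw [hp0]
      rw [this]
      exact lt_trans (hx i' j) (hxy i' j)
    have hSuniv : S = univ := by
      rcases isClopen_iff.mp ⟨hclosed, hopen⟩ with h | h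
      · rw [h] at hne0; exact absurd hne0 (notMem_empty _)
      · exact h
    have h1 : (1 : unitInterval) ∈ S := hSuniv ▸ mem_univ _
    have j0 : Fin n := ⟨0, hn⟩
    have hlt := h1 j0 (c j0) ⟨j0, hc j0⟩
    have : p 1 j0 = 1 := by rw [hp1]
    rw [this] at hlt
    exact absurd hlt (not_lt.mpr (le_of_lt (hy1 (c j0) j0)))
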